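/- Let K be a field of characteristic zero, and let g₁,...,gₙ ∈ K[[x]] be nonzero series with pairwise distinct orders d₁,...,dₙ. Then the order of W(g₁,...,gₙ) equals d₁+⋯+dₙ−C(n,2), and its lowest-order coefficient equals ∏_{i<j}(dⱼ−dᵢ)·∏ᵢ cᵢ, where cᵢ is the leading (lowest-order) coefficient of gᵢ. -/

import Mathlib

open PowerSeries Finset

lemma wr_coeff_iterate_derivative {K : Type*} [CommRing K] (f : PowerSeries K) (i m : ℕ) :
    coeff (R := K) m ((fun h => PowerSeries.derivative K h)^[i] f) =
      ((m + i).descFactorial i : K) * coeff (R := K) (m + i) f := by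
  induction i generalizing m with
  | zero => simp
  | succ i ih =>
    rw [Function.iterate_succ_apply', coeff_derivative, ih]
    have h1 : (m + (i + 1)).descFactorial (i + 1)
        = ((m + 1) + i).descFactorial i * (m + 1) := by
      rw [Nat.descFactorial_succ]
      have : m + (i + 1) - i = m + 1 := by omega
      rw [this]
      have : m + 1 + i = m + (i + 1) := by omega
      rw [this]; ring
    have h2 : m + 1 + i = m + (i + 1) := by omega
    rw [h2, h1]
    push_cast
    ring

lemma wr_choose_le_sum {n : ℕ} (d : Fin n → ℕ) (hdist : Function.Injective d) :
    n.choose 2 ≤ ∑ i, d i := by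
  classical
  set s : Finset ℕ := Finset.image d Finset.univ with hs
  have hcard : s.card = n := by
    rw [hs, Finset.card_image_of_injective _ hdist, Finset.card_univ, Fintype.card_fin]
  have hsum : ∑ i, d i = ∑ x ∈ s, x := by
    rw [hs, Finset.sum_image (fun a _ b _ h => hdist h)]
  set f := s.orderEmbOfFin hcard with hf
  have hmono : StrictMono f := (s.orderEmbOfFin hcard).strictMono
  have hle' : ∀ k (hk : k < n), k ≤ f ⟨k, hk⟩ := by
    intro k
    induction k with
    | zero => intro _; exact Nat.zero_le _
    | succ k ihk =>
      intro hk
      have hk' : k < n := by omega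
      have h1 := hmono (show (⟨k, hk'⟩ : Fin n) < ⟨k + 1, hk⟩ from by
        simp [Fin.lt_def])
      have h2 := ihk hk'
      omega
  have hle : ∀ i : Fin n, (i : ℕ) ≤ f i := fun i => hle' i i.isLt
  have himg : Finset.image f Finset.univ = s := by
    apply Finset.eq_of_subset_of_card_le
    · intro x hx
      simp only [Finset.mem_image] at hx
      obtain ⟨i, _, rfl⟩ := hx
      exact Finset.orderEmbOfFin_mem s hcard i
    · rw [hcard, Finset.card_image_of_injective _ hmono.injective, Finset.card_univ,
        Fintype.card_fin]
  have : ∑ x ∈ s, x = ∑ i : Fin n, f i := by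
    rw [← himg, Finset.sum_image (fun a _ b _ h => hmono.injective h)]
  calc n.choose 2 = ∑ i ∈ Finset.range n, i := by
        rw [Finset.sum_range_id, Nat.choose_two_right]
    _ = ∑ i : Fin n, (i : ℕ) := (Fin.sum_univ_eq_sum_range _ n).symm
    _ ≤ ∑ i : Fin n, f i := Finset.sum_le_sum fun i _ => hle i
    _ = ∑ i, d i := by rw [← this, hsum]

lemma wr_key {K : Type*} [Field K] {n : ℕ} (g : Fin n → PowerSeries K) (d : Fin n → ℕ)
    (hcoeffd : ∀ j k, k < d j → coeff (R := K) k (g j) = 0)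
    (N : ℕ) (hN : ∑ i, d i = N + n.choose 2)
    (σ : Equiv.Perm (Fin n)) (m : ℕ) (hm : m ≤ N) :
    coeff (R := K) m (∏ j, (fun h => PowerSeries.derivative K h)^[(σ j : ℕ)] (g j)) =
      if m = N then (∏ j, ((d j).descFactorial (σ j) : K)) * ∏ j, coeff (R := K) (d j) (g j)
      else 0 := by
  classical
  have hsig : ∑ j : Fin n, (σ j : ℕ) = n.choose 2 := by
    rw [Equiv.sum_comp σ (fun j : Fin n => (j : ℕ))]
    have h0 : ∑ i : Fin n, (i : ℕ) = ∑ i ∈ Finset.range n, i :=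
      Fin.sum_univ_eq_sum_range (fun i => i) n
    rw [h0, Finset.sum_range_id, Nat.choose_two_right]
  rw [coeff_prod]
  simp only [wr_coeff_iterate_derivative]
  have hvan : ∀ l : Fin n →₀ ℕ, (∃ j, l j + σ j < d j) →
      ∏ j, (((l j + (σ j : ℕ)).descFactorial (σ j) : K) * coeff (R := K) (l j + σ j) (g j)) = 0 := by
    rintro l ⟨j, hj⟩
    apply Finset.prod_eq_zero (Finset.mem_univ j)
    rw [hcoeffd j _ hj, mul_zero]
  by_cases hmeq : m = N
  · subst hmeq
    rw [if_pos rfl]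
    by_cases hall : ∀ j, (σ j : ℕ) ≤ d j
    · set l₀ : Fin n →₀ ℕ := Finsupp.equivFunOnFinite.symm (fun j => d j - σ j) with hl₀
      have hl₀app : ∀ j, l₀ j = d j - σ j := fun j => rfl
      have hl₀mem : l₀ ∈ finsuppAntidiag (univ : Finset (Fin n)) m := by
        rw [Finset.mem_finsuppAntidiag]
        constructor
        · rw [Finset.sum_congr rfl (fun j _ => hl₀app j),
            Finset.sum_tsub_distrib _ (fun j _ => hall j), hsig, hN]
          omega
        · exact Finset.subset_univ _
      rw [Finset.sum_eq_single_of_mem l₀ hl₀mem]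
      · rw [← Finset.prod_mul_distrib]
        apply Finset.prod_congr rfl
        intro j _
        rw [hl₀app j, Nat.sub_add_cancel (hall j)]
      · intro l hl hne
        by_cases hex : ∃ j, l j + σ j < d j
        · exact hvan l hex
        · push_neg at hex
          exfalso
          apply hne
          have hsum : ∑ j, l j = m := by
            simpa using (Finset.mem_finsuppAntidiag.mp hl).1
          have hsums : ∑ j, (l j + (σ j : ℕ)) = ∑ j, d j := by
            rw [Finset.sum_add_distrib, hsum, hsig, hN]
          have hpt : ∀ j ∈ (univ : Finset (Fin n)), d j = l j + (σ j : ℕ) :=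
            (Finset.sum_eq_sum_iff_of_le (fun j _ => hex j)).1 hsums.symm
          ext j
          rw [hl₀app j]
          have := hpt j (Finset.mem_univ j)
          omega
    · push_neg at hall
      obtain ⟨j₀, hj₀⟩ := hall
      rw [Finset.prod_eq_zero (Finset.mem_univ j₀)
        (by rw [Nat.descFactorial_eq_zero_iff_lt.mpr hj₀, Nat.cast_zero]), zero_mul]
      apply Finset.sum_eq_zero
      intro l hl
      by_cases hex : ∃ j, l j + σ j < d j
      · exact hvan l hex
      · push_neg at hex
        exfalso
        have hsum : ∑ j, l j = m := by
          simpa using (Finset.mem_finsuppAntidiag.mp hl).1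
        have hsums : ∑ j, (l j + (σ j : ℕ)) = ∑ j, d j := by
          rw [Finset.sum_add_distrib, hsum, hsig, hN]
        have hpt := (Finset.sum_eq_sum_iff_of_le (fun j (_ : j ∈ univ) => hex j)).1 hsums.symm
        have := hpt j₀ (Finset.mem_univ j₀)
        omega
  · rw [if_neg hmeq]
    apply Finset.sum_eq_zero
    intro l hl
    by_cases hex : ∃ j, l j + σ j < d j
    · exact hvan l hex
    · push_neg at hex
      exfalso
      have hsum : ∑ j, l j = m := by
        simpa using (Finset.mem_finsuppAntidiag.mp hl).1
      have hle : ∑ j, d j ≤ ∑ j, (l j + (σ j : ℕ)) := Finset.sum_le_sum fun j _ => hex j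
      rw [Finset.sum_add_distrib, hsum, hsig, hN] at hle
      omega

theorem wronskian_order_and_leading_coeff {K : Type*} [Field K] [CharZero K]
    (n : ℕ) (g : Fin n → PowerSeries K) (d : Fin n → ℕ)
    (hg : ∀ i, g i ≠ 0) (hd : ∀ i, (g i).order = (d i : ℕ∞))
    (hdist : Function.Injective d) :
    (Matrix.det (Matrix.of fun i j : Fin n =>
        (fun h => PowerSeries.derivative K h)^[(i : ℕ)] (g j))).order =
      ((∑ i, d i - n.choose 2 : ℕ) : ℕ∞) ∧
    PowerSeries.coeff (R := K) (∑ i, d i - n.choose 2)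
        (Matrix.det (Matrix.of fun i j : Fin n =>
          (fun h => PowerSeries.derivative K h)^[(i : ℕ)] (g j))) =
      (∏ i : Fin n, ∏ j ∈ Ioi i, ((d j : K) - (d i : K))) *
        ∏ i, PowerSeries.coeff (R := K) (d i) (g i) := by
  classical
  set N := ∑ i, d i - n.choose 2 with hNdef
  have hcoeffd : ∀ j k, k < d j → coeff (R := K) k (g j) = 0 := by
    intro j k hk
    apply coeff_of_lt_order
    rw [hd j]
    exact_mod_cast hk
  have hsumd := wr_choose_le_sum d hdist
  have hN : ∑ i, d i = N + n.choose 2 := by omega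
  set M := Matrix.of fun i j : Fin n =>
    (fun h => PowerSeries.derivative K h)^[(i : ℕ)] (g j) with hM
  have hdesc : (Matrix.of fun i j : Fin n => ((d j).descFactorial i : K)).det =
      ∏ i : Fin n, ∏ j ∈ Ioi i, ((d j : K) - (d i : K)) := by
    have h1 : (Matrix.of fun i j : Fin n => ((d j).descFactorial i : K)) =
        Matrix.transpose
          (Matrix.of fun i j : Fin n => (descPochhammer K (j : ℕ)).eval ((d i : K))) := by
      ext i j
      simp [Matrix.transpose_apply, descPochhammer_eval_eq_descFactorial]
    rw [h1, Matrix.det_transpose,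
      ← Matrix.det_eval_matrixOfPolynomials_eq_det_vandermonde (fun i : Fin n => (d i : K))
        (fun i => descPochhammer K (i : ℕ)) (fun i => descPochhammer_natDegree (R := K) (i : ℕ))
        (fun i => monic_descPochhammer K (i : ℕ)),
      Matrix.det_vandermonde]
  have hdet : ∀ m ≤ N, coeff (R := K) m M.det =
      if m = N then (Matrix.of fun i j : Fin n => ((d j).descFactorial i : K)).det *
        ∏ j, coeff (R := K) (d j) (g j) else 0 := by
    intro m hm
    rw [Matrix.det_apply, map_sum]
    have hsmul : ∀ σ : Equiv.Perm (Fin n),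
        coeff (R := K) m (Equiv.Perm.sign σ • ∏ i, M (σ i) i) =
          Equiv.Perm.sign σ • coeff (R := K) m (∏ i, M (σ i) i) := by
      intro σ
      rw [Units.smul_def, Units.smul_def, map_zsmul]
    have hterm : ∀ σ : Equiv.Perm (Fin n), coeff (R := K) m (∏ i, M (σ i) i) =
        if m = N then (∏ j, ((d j).descFactorial (σ j) : K)) *
          ∏ j, coeff (R := K) (d j) (g j) else 0 := by
      intro σ
      have := wr_key g d hcoeffd N hN σ m hm
      simpa [hM] using this
    by_cases hmeq : m = N
    · subst hmeq
      rw [if_pos rfl, Matrix.det_apply, Finset.sum_mul]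
      apply Finset.sum_congr rfl
      intro σ _
      rw [hsmul σ, hterm σ, if_pos rfl, Units.smul_def, Units.smul_def, smul_mul_assoc]
      rfl
    · rw [if_neg hmeq]
      apply Finset.sum_eq_zero
      intro σ _
      rw [hsmul σ, hterm σ, if_neg hmeq, smul_zero]
  have hcne : ∀ j, coeff (R := K) (d j) (g j) ≠ 0 := fun j => (order_eq_nat.mp (hd j)).1
  have hVne : (∏ i : Fin n, ∏ j ∈ Ioi i, ((d j : K) - (d i : K))) ≠ 0 := by
    rw [Finset.prod_ne_zero_iff]
    intro i _
    rw [Finset.prod_ne_zero_iff]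
    intro j hj
    have hij : i < j := Finset.mem_Ioi.mp hj
    exact sub_ne_zero.mpr fun h => hij.ne' (hdist (by exact_mod_cast h : d j = d i))
  have hcoeffN : coeff (R := K) N M.det =
      (∏ i : Fin n, ∏ j ∈ Ioi i, ((d j : K) - (d i : K))) *
        ∏ i, coeff (R := K) (d i) (g i) := by
    rw [hdet N le_rfl, if_pos rfl, hdesc]
  refine ⟨?_, hcoeffN⟩
  rw [order_eq_nat]
  refine ⟨?_, ?_⟩
  · rw [hcoeffN]
    exact mul_ne_zero hVne (Finset.prod_ne_zero_iff.mpr fun j _ => hcne j)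
  · intro i hi
    rw [hdet i hi.le, if_neg (Nat.ne_of_lt hi)]
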